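/- Let Δ ≥ 1, let 0 ≤ a ≤ Δ and 0 ≤ k ≤ Δ, and let G be a finite Δ-regular simple graph. If G has a k-outdegree dominating set, i.e., a dominating set S together with an orientation of the edges of the induced subgraph G[S] in which every vertex of S has outdegree at most k, then G admits a valid Π_Δ(a,k)-labeling. -/

import Mathlib

inductive Lab : Type
  | M | P | O | A | X
  deriving DecidableEq

instance : Fintype Lab where
  elems := {Lab.M, Lab.P, Lab.O, Lab.A, Lab.X}
  complete := by intro x; cases x <;> simp

/-- Node constraint `N_Δ(a,x)`: the three allowed multisets of size `Δ`. -/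
def nodeC (Δ a x : ℕ) (m : Multiset Lab) : Prop :=
  m = Multiset.replicate (Δ - x) Lab.M + Multiset.replicate x Lab.X ∨
  m = Multiset.replicate a Lab.A + Multiset.replicate (Δ - a) Lab.X ∨
  m = Lab.P ::ₘ Multiset.replicate (Δ - 1) Lab.O

/-- Edge constraint `E`: all unordered pairs except `{M,M}, {A,A}, {P,P}, {P,A}, {P,O}`. -/
def edgeC (l₁ l₂ : Lab) : Prop :=
  ¬ ((l₁ = Lab.M ∧ l₂ = Lab.M) ∨ (l₁ = Lab.A ∧ l₂ = Lab.A) ∨ (l₁ = Lab.P ∧ l₂ = Lab.P) ∨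
     (l₁ = Lab.P ∧ l₂ = Lab.A) ∨ (l₁ = Lab.A ∧ l₂ = Lab.P) ∨
     (l₁ = Lab.P ∧ l₂ = Lab.O) ∨ (l₁ = Lab.O ∧ l₂ = Lab.P))

instance (l₁ l₂ : Lab) : Decidable (edgeC l₁ l₂) := by
  unfold edgeC; infer_instance

/-- A valid `Π_Δ(a,x)`-labeling: `ℓ u v` is the label that `u` assigns to the edge `{u,v}`. -/
def validLabeling {V : Type*} [Fintype V] (G : SimpleGraph V) [DecidableRel G.Adj]
    (Δ a x : ℕ) (ℓ : V → V → Lab) : Prop :=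
  (∀ v : V, nodeC Δ a x ((G.neighborFinset v).val.map (ℓ v))) ∧
  (∀ u v : V, G.Adj u v → edgeC (ℓ u v) (ℓ v u))

/-- Splitting the multiset of a finset along a subset. -/
lemma finset_val_split {V : Type*} [DecidableEq V] (s t : Finset V) (h : t ⊆ s) :
    s.val = t.val + (s \ t).val := by
  rw [Finset.sdiff_val, add_comm,
    tsub_add_cancel_of_le (Finset.val_le_iff.mpr h)]

/-- If a finite `Δ`-regular simple graph has a `k`-outdegree dominating set
(a dominating set `S` with an orientation `r` of the edges of `G[S]` in which every vertex of
`S` has outdegree at most `k`), then `G` admits a valid `Π_Δ(a,k)`-labeling. -/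
theorem stmt_0 {V : Type*} [Fintype V] (G : SimpleGraph V) [DecidableRel G.Adj]
    (Δ a k : ℕ) (hΔ : 1 ≤ Δ) (ha : a ≤ Δ) (hk : k ≤ Δ)
    (hreg : G.IsRegularOfDegree Δ)
    (S : Set V)
    (hdom : ∀ v, v ∉ S → ∃ u ∈ S, G.Adj v u)
    (r : V → V → Prop)
    (hr : ∀ u v, r u v → u ∈ S ∧ v ∈ S ∧ G.Adj u v)
    (hor : ∀ u v, u ∈ S → v ∈ S → G.Adj u v → (r u v ↔ ¬ r v u))
    (hout : ∀ v ∈ S, {u | r v u}.ncard ≤ k) :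
    ∃ ℓ : V → V → Lab, validLabeling G Δ a k ℓ := by
  classical
  -- the out-neighborhood of a vertex, as a finset
  set Ov : V → Finset V := fun v => (G.neighborFinset v).filter (fun u => r v u) with hOv
  have hOvset : ∀ v, (Ov v : Set V) = {u | r v u} := by
    intro v
    ext u
    simp only [hOv, Finset.coe_filter, SimpleGraph.mem_neighborFinset, Set.mem_setOf_eq,
      Set.mem_sep_iff]
    exact ⟨fun h => h.2, fun h => ⟨(hr v u h).2.2, h⟩⟩
  have hOvcard : ∀ v ∈ S, (Ov v).card ≤ k := by
    intro v hv
    have := hout v hv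
    rwa [← hOvset v, Set.ncard_coe_finset] at this
  have hdeg : ∀ v : V, (G.neighborFinset v).card = Δ := by
    intro v
    rw [SimpleGraph.card_neighborFinset_eq_degree]
    exact hreg v
  -- for each vertex of S, choose a padded set of k neighbors containing all out-neighbors
  have hT : ∀ v ∈ S, ∃ T : Finset V,
      Ov v ⊆ T ∧ T ⊆ G.neighborFinset v ∧ T.card = k := by
    intro v hv
    exact Finset.exists_subsuperset_card_eq (Finset.filter_subset _ _) (hOvcard v hv)
      (by rw [hdeg v]; exact hk)
  choose T hT1 hT2 hT3 using hT
  -- for each vertex outside S, choose a dominating neighbor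
  choose d hd1 hd2 using hdom
  -- non-dependent versions
  set T' : V → Finset V := fun w => if h : w ∈ S then T w h else ∅ with hT'def
  set d' : V → V := fun w => if h : w ∈ S then w else d w h with hd'def
  have hT'S : ∀ w (h : w ∈ S), T' w = T w h := fun w h => dif_pos h
  have hd'S : ∀ w (h : w ∉ S), d' w = d w h := fun w h => dif_neg h
  -- the labeling
  refine ⟨fun v u =>
    if v ∈ S then (if u ∈ T' v then Lab.X else Lab.M)
    else (if u = d' v then Lab.P else Lab.O), ?_, ?_⟩
  · -- node constraint
    intro v
    by_cases hv : v ∈ S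
    · left
      have hsplit := finset_val_split (G.neighborFinset v) (T v hv) (hT2 v hv)
      rw [hsplit, Multiset.map_add]
      have h1 : Multiset.map (fun u => if v ∈ S then
            (if u ∈ T' v then Lab.X else Lab.M)
            else (if u = d' v then Lab.P else Lab.O)) (T v hv).val
          = Multiset.replicate k Lab.X := by
        rw [Multiset.map_congr rfl (g := Function.const V Lab.X)
          (fun x hx => by simp [hv, hT'S v hv, Finset.mem_def.mpr hx]), Multiset.map_const]
        congr 1
        exact hT3 v hv
      have h2 : Multiset.map (fun u => if v ∈ S then
            (if u ∈ T' v then Lab.X else Lab.M)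
            else (if u = d' v then Lab.P else Lab.O))
            (G.neighborFinset v \ T v hv).val
          = Multiset.replicate (Δ - k) Lab.M := by
        rw [Multiset.map_congr rfl (g := Function.const V Lab.M)
          (fun x hx => by
            have hx' : x ∉ T v hv := (Finset.mem_sdiff.mp hx).2
            simp [hv, hT'S v hv, hx']), Multiset.map_const]
        congr 1
        rw [← Finset.card_def, Finset.card_sdiff_of_subset (hT2 v hv), hT3 v hv, hdeg v]
      rw [h1, h2, add_comm]
    · right; right
      have hdmem : d v hv ∈ G.neighborFinset v := by
        rw [SimpleGraph.mem_neighborFinset]; exact hd2 v hv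
      have hsplit := finset_val_split (G.neighborFinset v) {d v hv}
        (Finset.singleton_subset_iff.mpr hdmem)
      rw [hsplit, Multiset.map_add]
      have h1 : Multiset.map (fun u => if v ∈ S then
            (if u ∈ T' v then Lab.X else Lab.M)
            else (if u = d' v then Lab.P else Lab.O)) ({d v hv} : Finset V).val
          = {Lab.P} := by simp [hv, hd'S v hv]
      have h2 : Multiset.map (fun u => if v ∈ S then
            (if u ∈ T' v then Lab.X else Lab.M)
            else (if u = d' v then Lab.P else Lab.O))
            (G.neighborFinset v \ {d v hv}).val
          = Multiset.replicate (Δ - 1) Lab.O := by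
        rw [Multiset.map_congr rfl (g := Function.const V Lab.O)
          (fun x hx => by
            have hx' : x ≠ d v hv := by
              have := (Finset.mem_sdiff.mp hx).2
              simpa using this
            simp [hv, hd'S v hv, hx']), Multiset.map_const]
        congr 1
        rw [← Finset.card_def,
          Finset.card_sdiff_of_subset (Finset.singleton_subset_iff.mpr hdmem),
          Finset.card_singleton, hdeg v]
      rw [h1, h2, Multiset.singleton_add]
  · -- edge constraint
    intro u v huv
    by_cases hu : u ∈ S <;> by_cases hv : v ∈ S <;>
      simp only [hu, hv, if_true, if_false, eq_self_iff_true, if_pos, if_neg,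
        not_false_iff, not_true]
    · -- both in S : forbid M-M
      split_ifs with h1 h2 h3
      · simp [edgeC]
      · simp [edgeC]
      · simp [edgeC]
      · exfalso
        have hone : r u v ∨ r v u := by
          by_cases hruv : r u v
          · exact Or.inl hruv
          · exact Or.inr (not_not.mp (fun h => hruv ((hor u v hu hv huv).mpr h)))
        rcases hone with h | h
        · refine h1 ?_
          rw [hT'S u hu]
          exact hT1 u hu (Finset.mem_filter.mpr
            ⟨(SimpleGraph.mem_neighborFinset G u v).mpr huv, h⟩)
        · refine h3 ?_
          rw [hT'S v hv]
          exact hT1 v hv (Finset.mem_filter.mpr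
            ⟨(SimpleGraph.mem_neighborFinset G v u).mpr huv.symm, h⟩)
    · split_ifs <;> simp [edgeC]
    · split_ifs <;> simp [edgeC]
    · -- both outside S: both must be O
      have h1 : v ≠ d' u := by
        rw [hd'S u hu]; exact fun h => hv (h ▸ hd1 u hu)
      have h2 : u ≠ d' v := by
        rw [hd'S v hv]; exact fun h => hu (h ▸ hd1 v hv)
      simp [h1, h2, edgeC]
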